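/- In the REDUCE step of the tableau algorithm, the label (r̄, s̄) of the new child is strictly smaller than (r,s) in the cardinality-lexicographic order: either |r̄ + s̄| < |r + s|, or |r̄ + s̄| = |r + s| and r̄ + s̄ <_lex r + s. -/
import Mathlib


/-- Cardinality of a multiset over a finite set. -/
def mcard {S : Type} [Fintype S] (m : S → ℕ) : ℕ := ∑ s, m s

/-- Strict lexicographic comparison of multisets viewed as vectors. -/
def lexLt {S : Type} [LinearOrder S] (m m' : S → ℕ) : Prop :=
  Pi.Lex (· < ·) (· < ·) m m'

/-- `a` is strictly smaller than `b` in the cardinality-lexicographic order. -/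
def cardLexLt {S : Type} [Fintype S] [LinearOrder S] (a b : S → ℕ) : Prop :=
  mcard a < mcard b ∨ (mcard a = mcard b ∧ lexLt a b)

lemma mcard_add {S : Type} [Fintype S] (a b : S → ℕ) :
    mcard (a + b) = mcard a + mcard b := by
  simp [mcard, Finset.sum_add_distrib]

lemma mcard_sub_add {S : Type} [Fintype S] {a b : S → ℕ} (h : b ≤ a) :
    mcard (a - b) + mcard b = mcard a := by
  rw [← mcard_add]; congr 1; funext x; simp [Nat.sub_add_cancel (h x)]

lemma lexLt_add_left {S : Type} [LinearOrder S] (f a b : S → ℕ) (h : lexLt a b) :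
    lexLt (f + a) (f + b) := by
  obtain ⟨i, hj, hi⟩ := h
  exact ⟨i, fun j hji => by simp [hj j hji], by simpa using hi⟩

lemma lexLt_add_right {S : Type} [LinearOrder S] (f a b : S → ℕ) (h : lexLt a b) :
    lexLt (a + f) (b + f) := by
  obtain ⟨i, hj, hi⟩ := h
  exact ⟨i, fun j hji => by simp [hj j hji], by simpa using hi⟩

/-- In the REDUCE step of the tableau algorithm, the label `(r̄, s̄)` of the new child is
strictly smaller than `(r, s)` in the cardinality-lexicographic order (applied to the sums
`r̄ + s̄` and `r + s`): in the first case `(r̄,s̄) = (r, (s − s') + r')`, in the second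
`(r̄,s̄) = ((r − r') + s', s)`. -/
theorem reduce_decreases {P : Type} [Fintype P] [LinearOrder P]
    (r s r' s' : P → ℕ) (hr : r' ≤ r) (hs : s' ≤ s) (hrs : r ≠ s) (hne : r' ≠ s') :
    ((mcard r' < mcard s' ∨ (mcard r' = mcard s' ∧ lexLt r' s')) →
      cardLexLt (r + ((s - s') + r')) (r + s)) ∧
    ((mcard s' < mcard r' ∨ (mcard r' = mcard s' ∧ lexLt s' r')) →
      cardLexLt (((r - r') + s') + s) (r + s)) := by
  have hss : (s - s') + s' = s := by funext x; simp [Nat.sub_add_cancel (hs x)]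
  have hrr : (r - r') + r' = r := by funext x; simp [Nat.sub_add_cancel (hr x)]
  constructor
  · rintro (h | ⟨he, hl⟩)
    · left
      rw [mcard_add, mcard_add, mcard_add]
      have := mcard_sub_add hs
      omega
    · right
      constructor
      · rw [mcard_add, mcard_add, mcard_add]
        have := mcard_sub_add hs
        omega
      · have : r + s = (r + (s - s')) + s' := by rw [add_assoc, hss]
        rw [this, ← add_assoc]
        exact lexLt_add_left _ _ _ hl
  · rintro (h | ⟨he, hl⟩)
    · left
      rw [mcard_add, mcard_add, mcard_add]
      have := mcard_sub_add hr
      omega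
    · right
      constructor
      · rw [mcard_add, mcard_add, mcard_add]
        have := mcard_sub_add hr
        omega
      · have : r + s = ((r - r') + r') + s := by rw [hrr]
        rw [this]
        exact lexLt_add_right _ _ _ (lexLt_add_left _ _ _ hl)
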